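/- arXiv:2510.06934 — 2 statements merged into one kernel-verified Lean document; each statement's English description precedes it below -/
import Mathlib

section
/- For every finite label set X, the graph exponential map exp : A_X → 1 + A_X, defined by exp(a) := 1 + Σ_g (ℓ_g/|g|!) · g(a,…,a) with the sum over all isomorphism classes of directed simple graphs g, is a bijection. -/
open scoped Classical

namespace LieGraph

/-- Bare data of a finite `X`-labelled directed graph on the vertex set `Fin n`. -/
structure PreG (X : Type) where
  n : ℕ
  R : Fin n → Fin n → Prop
  label : Fin n → X

/-- Symmetrisation of the edge relation. -/
def PreG.sym {X : Type} (G : PreG X) : Fin G.n → Fin G.n → Prop :=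
  fun u v => G.R u v ∨ G.R v u

/-- `G` is an `X`-labelled directed simple graph: nonempty vertex set, irreflexive,
antisymmetric, acyclic (no directed cycle) and weakly connected edge relation. -/
def IsDS {X : Type} (G : PreG X) : Prop :=
  0 < G.n ∧ (∀ v, ¬ G.R v v) ∧ (∀ a b, G.R a b → ¬ G.R b a) ∧
    (∀ v, ¬ Relation.TransGen G.R v v) ∧
    ∀ a b, Relation.ReflTransGen G.sym a b

/-- `X`-labelled directed simple graphs. -/
abbrev LDG (X : Type) : Type := {G : PreG X // IsDS G}

/-- Label-preserving isomorphism of labelled graphs. -/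
def PIso {X : Type} (G H : PreG X) : Prop :=
  ∃ e : Fin G.n ≃ Fin H.n,
    (∀ a b, G.R a b ↔ H.R (e a) (e b)) ∧ ∀ v, H.label (e v) = G.label v

def LIso {X : Type} (G H : LDG X) : Prop := PIso G.1 H.1

/-- Isomorphism classes of `X`-labelled directed simple graphs. -/
abbrev LClass (X : Type) : Type := Quot (LIso (X := X))

/-- The space `A_X` of formal series indexed by iso classes of `X`-labelled
directed simple graphs. -/
abbrev AX (X : Type) : Type := LClass X → ℚ

/-- Induced subgraph of `G` on a finite set `S` of vertices, transported to `Fin S.card`. -/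
def induced {X : Type} (G : PreG X) (S : Finset (Fin G.n)) : PreG X where
  n := S.card
  R a b := G.R (S.orderIsoOfFin rfl a).1 (S.orderIsoOfFin rfl b).1
  label a := G.label (S.orderIsoOfFin rfl a).1

/-- Evaluate the series `f` at the induced subgraph of `G` on `S` when the latter is a
directed simple graph, and return `0` otherwise. -/
noncomputable def evalAt {X : Type} (f : AX X) (G : PreG X) (S : Finset (Fin G.n)) : ℚ :=
  if h : IsDS (induced G S) then f (Quot.mk _ ⟨induced G S, h⟩) else 0

/-- Coefficient at `H` of the substitution of the series `a 1, …, a n` in the graph with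
vertex set `Fin n` and edge relation `R`: the sum, over all ordered partitions of the
vertex set of `H` into `n` nonempty blocks whose contraction (merging parallel edges)
gives `R`, of the product of the coefficients of `a i` at the induced block subgraphs. -/
noncomputable def subCoeff {X : Type} {n : ℕ} (R : Fin n → Fin n → Prop)
    (a : Fin n → AX X) (H : PreG X) : ℚ :=
  ∑ p : Fin H.n → Fin n,
    if (Function.Surjective p ∧
        ∀ i j : Fin n, R i j ↔ i ≠ j ∧ ∃ u v, p u = i ∧ p v = j ∧ H.R u v) then
      ∏ i : Fin n, evalAt (a i) H (Finset.univ.filter fun v => p v = i)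
    else 0

/-- Bare data of a `k`-leveled graph. -/
structure PreLev (k : ℕ) where
  n : ℕ
  R : Fin n → Fin n → Prop
  level : Fin n → Fin k

def PreLev.sym {k : ℕ} (G : PreLev k) : Fin G.n → Fin G.n → Prop :=
  fun u v => G.R u v ∨ G.R v u

/-- A `k`-leveled directed simple graph: a directed simple graph whose vertices sit on `k`
ordered levels so that every edge goes from a vertex on an upper level to a vertex on a
strictly lower level. -/
def IsLev {k : ℕ} (G : PreLev k) : Prop :=
  0 < G.n ∧ (∀ v, ¬ G.R v v) ∧ (∀ a b, G.R a b → ¬ G.R b a) ∧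
    (∀ v, ¬ Relation.TransGen G.R v v) ∧
    (∀ a b, Relation.ReflTransGen G.sym a b) ∧
    ∀ a b, G.R a b → G.level b < G.level a

abbrev LevG (k : ℕ) : Type := {G : PreLev k // IsLev G}

/-- Level-preserving isomorphism of leveled graphs. -/
def LevPIso {k : ℕ} (G H : PreLev k) : Prop :=
  ∃ e : Fin G.n ≃ Fin H.n,
    (∀ a b, G.R a b ↔ H.R (e a) (e b)) ∧ ∀ v, H.level (e v) = G.level v

def LevIso {k : ℕ} (G H : LevG k) : Prop := LevPIso G.1 H.1

/-- Isomorphism classes of `k`-leveled directed simple graphs. -/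
abbrev LevClass (k : ℕ) : Type := Quot (LevIso (k := k))

/-- Automorphisms of a leveled graph: permutations of the vertices preserving both the
edge relation and the levels. -/
def LevAut {k : ℕ} (G : PreLev k) : Type :=
  {e : Equiv.Perm (Fin G.n) //
    (∀ a b, G.R a b ↔ G.R (e a) (e b)) ∧ ∀ v, G.level (e v) = G.level v}

/-- Coefficient at `H` of `Σ_g (1/|Aut g|) · g(vals ∘ level)`, the sum running over all
isomorphism classes of `k`-leveled directed simple graphs, a vertex on level `l` being
substituted with the series `vals l`. -/
noncomputable def levSum {X : Type} {k : ℕ} (vals : Fin k → AX X) (H : PreG X) : ℚ :=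
  ∑ᶠ q : LevClass k,
    ((Nat.card (LevAut q.out.1) : ℚ))⁻¹ *
      subCoeff q.out.1.R (fun i => vals (q.out.1.level i)) H

/-- The product `⊙` of `1 + A_X`, written on the non-unit components:
`(1+a) ⊙ (1+b) = 1 + odot a b`. Bottom-level (level `0`) vertices are substituted
with `a`, top-level (level `1`) vertices with `b`. -/
noncomputable def odot {X : Type} (a b : AX X) : AX X :=
  fun hq => levSum ![a, b] hq.out.1


/-- `ℓ_g`: the number of total levelisations of the graph `G`, i.e. of placements of its
`n` vertices on `n` ordered levels, one vertex per level, such that every edge goes from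
a vertex on an upper level to a vertex on a strictly lower level. -/
noncomputable def numLev {X : Type} (G : PreG X) : ℕ :=
  Nat.card {e : Fin G.n ≃ Fin G.n // ∀ u v, G.R u v → e v < e u}

/-- The graph exponential map `exp : A_X → 1 + A_X`,
`exp(a) = 1 + Σ_g (ℓ_g/|g|!) · g(a,…,a)` (written here on the non-unit component), the
sum running over all isomorphism classes of (unlabelled, i.e. `Unit`-labelled) directed
simple graphs `g`, with every vertex substituted with `a`. -/
noncomputable def expMap {X : Type} (a : AX X) : AX X :=
  fun hq => ∑ᶠ q : LClass Unit,
    ((numLev q.out.1 : ℚ) / (Nat.factorial q.out.1.n : ℚ)) *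
      subCoeff q.out.1.R (fun _ => a) hq.out.1

section Aux
variable {X : Type}

lemma piso_refl (G : PreG X) : PIso G G :=
  ⟨Equiv.refl _, fun _ _ => Iff.rfl, fun _ => rfl⟩

lemma piso_symm {G H : PreG X} (h : PIso G H) : PIso H G := by
  obtain ⟨e, hR, hl⟩ := h
  refine ⟨e.symm, fun a b => ?_, fun v => ?_⟩
  · rw [hR (e.symm a) (e.symm b)]; simp
  · rw [← hl (e.symm v)]; simp

lemma piso_trans {G H K : PreG X} (h1 : PIso G H) (h2 : PIso H K) : PIso G K := by
  obtain ⟨e, hR, hl⟩ := h1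
  obtain ⟨f, fR, fl⟩ := h2
  exact ⟨e.trans f, fun a b => (hR a b).trans (fR (e a) (e b)),
    fun v => (fl (e v)).trans (hl v)⟩

lemma lisoEquiv : Equivalence (LIso (X := X)) :=
  ⟨fun G => piso_refl G.1, piso_symm, piso_trans⟩

lemma liso_of_eq {G H : LDG X} (h : Quot.mk LIso G = Quot.mk LIso H) : LIso G H :=
  (Equivalence.eqvGen_iff lisoEquiv).mp (Quot.eqvGen_exact h)

lemma out_liso {G : LDG X} : LIso (Quot.mk LIso G).out G :=
  liso_of_eq (by rw [Quot.out_eq])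

noncomputable def nu (h : LClass X) : ℕ := h.out.1.n

lemma piso_n_eq {G H : PreG X} (h : PIso G H) : G.n = H.n := by
  obtain ⟨e, _, _⟩ := h
  simpa using Fintype.card_congr e

lemma nu_mk (G : LDG X) : nu (Quot.mk LIso G) = G.1.n :=
  piso_n_eq (out_liso (G := G))

lemma isDS_of_piso {G H : PreG X} (h : PIso G H) (hG : IsDS G) : IsDS H := by
  obtain ⟨e, hR, _⟩ := h
  obtain ⟨hpos, hirr, hanti, hacyc, hconn⟩ := hG
  refine ⟨(e ⟨0, hpos⟩).pos, ?_, ?_, ?_, ?_⟩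
  · intro v hv
    exact hirr (e.symm v) ((hR _ _).mpr (by simpa using hv))
  · intro a b hab hba
    exact hanti (e.symm a) (e.symm b) ((hR _ _).mpr (by simpa using hab))
      ((hR _ _).mpr (by simpa using hba))
  · intro v hv
    refine hacyc (e.symm v) ?_
    exact Relation.TransGen.lift e.symm
      (fun a b hab => (hR _ _).mpr (by simpa using hab)) _ _ hv
  · intro a b
    have h0 := hconn (e.symm a) (e.symm b)
    have := Relation.ReflTransGen.lift (p := H.sym) e
      (fun u v huv => (Or.imp (hR u v).mp (hR v u).mp huv : H.sym (e u) (e v))) _ _ h0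
    simpa [Function.onFun] using this

lemma piso_induced_univ (G : PreG X) : PIso (induced G Finset.univ) G := by
  refine ⟨(((Finset.univ : Finset (Fin G.n)).orderIsoOfFin rfl).toEquiv.trans
    (Equiv.subtypeUnivEquiv (fun x => Finset.mem_univ x))), fun a b => ?_, fun v => ?_⟩
  · exact Iff.rfl
  · rfl

lemma evalAt_eq {a a' : AX X} (G : PreG X) (S : Finset (Fin G.n))
    (hga : ∀ h' : LClass X, nu h' = S.card → a h' = a' h') :
    evalAt a G S = evalAt a' G S := by
  unfold evalAt
  split
  · exact hga _ (nu_mk _)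
  · rfl


def oneV : PreG Unit where
  n := 1
  R _ _ := False
  label _ := ()

lemma oneV_isDS : IsDS oneV := by
  refine ⟨one_pos, fun _ h => h, fun _ _ h => h.elim, ?_, ?_⟩
  · intro v h
    cases h with
    | single h => exact h
    | tail _ h => exact h
  · intro a b
    exact (Subsingleton.elim (α := Fin 1) a b) ▸ Relation.ReflTransGen.refl

noncomputable def oneC : LClass Unit := Quot.mk _ ⟨oneV, oneV_isDS⟩

lemma eq_oneC (q : LClass Unit) (h1 : q.out.1.n = 1) : q = oneC := by
  have hsub : Subsingleton (Fin q.out.1.n) := h1 ▸ (inferInstance : Subsingleton (Fin 1))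
  have hiso : LIso q.out ⟨oneV, oneV_isDS⟩ := by
    refine ⟨finCongr h1, fun a b => ?_, fun v => rfl⟩
    constructor
    · intro hab
      exact q.out.2.2.1 b ((@Subsingleton.elim _ hsub a b) ▸ hab)
    · intro f
      exact f.elim
  calc q = Quot.mk _ q.out := (Quot.out_eq q).symm
    _ = oneC := Quot.sound hiso

lemma numLev_eq_one {Y : Type} (G : PreG Y) (h1 : G.n = 1)
    (hirr : ∀ v, ¬ G.R v v) : numLev G = 1 := by
  have hsub : Subsingleton (Fin G.n) := h1 ▸ (inferInstance : Subsingleton (Fin 1))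
  haveI : Subsingleton {e : Fin G.n ≃ Fin G.n // ∀ u v, G.R u v → e v < e u} :=
    ⟨fun e f => Subtype.ext (Equiv.ext fun x => @Subsingleton.elim _ hsub _ _)⟩
  haveI : Nonempty {e : Fin G.n ≃ Fin G.n // ∀ u v, G.R u v → e v < e u} :=
    ⟨⟨Equiv.refl _, fun u v huv => ((hirr v) ((@Subsingleton.elim _ hsub u v) ▸ huv)).elim⟩⟩
  exact Nat.card_unique

variable {X : Type}

lemma F_oneC (a : AX X) (h : LClass X) :
    ((numLev oneC.out.1 : ℚ) / (Nat.factorial oneC.out.1.n : ℚ)) *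
      subCoeff oneC.out.1.R (fun _ => a) h.out.1 = a h := by
  obtain ⟨e, hR, -⟩ := (out_liso (G := (⟨oneV, oneV_isDS⟩ : LDG Unit)) : LIso oneC.out _)
  have h1 : oneC.out.1.n = 1 := by
    have := Fintype.card_congr e; simp only [Fintype.card_fin] at this; exact this
  have hsub : Subsingleton (Fin oneC.out.1.n) := h1 ▸ (inferInstance : Subsingleton (Fin 1))
  have hirr := oneC.out.2.2.1
  have hposH : 0 < h.out.1.n := h.out.2.1
  -- coefficient is 1
  have hfac : (Nat.factorial oneC.out.1.n) = 1 := by rw [h1]; rfl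
  rw [numLev_eq_one _ h1 hirr, hfac]
  norm_num
  -- now the subCoeff
  have hposG : 0 < oneC.out.1.n := by omega
  set i₀ : Fin oneC.out.1.n := ⟨0, hposG⟩ with hi₀
  set p₀ : Fin h.out.1.n → Fin oneC.out.1.n := fun _ => i₀ with hp₀
  haveI : Subsingleton (Fin oneC.out.1.n) := hsub
  unfold subCoeff
  rw [Finset.sum_eq_single_of_mem p₀ (Finset.mem_univ _)
    (fun b _ hb => absurd (funext fun v => Subsingleton.elim _ _) hb)]
  rw [if_pos ?cond]
  case cond =>
    constructor
    · intro y
      exact ⟨⟨0, hposH⟩, Subsingleton.elim _ _⟩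
    · intro i j
      constructor
      · intro hij
        exact absurd ((Subsingleton.elim i j) ▸ hij) (hirr j)
      · rintro ⟨hne, -⟩
        exact absurd (Subsingleton.elim i j) hne
  rw [Finset.prod_eq_single_of_mem i₀ (Finset.mem_univ _)
    (fun b _ hb => absurd (Subsingleton.elim _ _) hb)]
  have hfil : (Finset.univ.filter fun v => p₀ v = i₀) = Finset.univ :=
    Finset.filter_true_of_mem (fun x _ => Subsingleton.elim _ _)
  rw [hfil]
  have hP := piso_induced_univ h.out.1
  have hds : IsDS (induced h.out.1 Finset.univ) := isDS_of_piso (piso_symm hP) h.out.2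
  unfold evalAt
  rw [dif_pos hds]
  have : Quot.mk LIso (⟨induced h.out.1 Finset.univ, hds⟩ : LDG X) = h := by
    calc Quot.mk LIso (⟨induced h.out.1 Finset.univ, hds⟩ : LDG X)
        = Quot.mk LIso h.out := Quot.sound hP
      _ = h := Quot.out_eq h
  rw [this]


lemma subCoeff_congr (a a' : AX X) (h : LClass X) (q : LClass Unit) (hq : q ≠ oneC)
    (hbelow : ∀ h', nu h' < nu h → a h' = a' h') :
    subCoeff q.out.1.R (fun _ => a) h.out.1 = subCoeff q.out.1.R (fun _ => a') h.out.1 := by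
  have hpos : 0 < q.out.1.n := q.out.2.1
  have h2 : 2 ≤ q.out.1.n := by
    rcases Nat.lt_or_ge q.out.1.n 2 with hlt | hge
    · exact absurd (eq_oneC q (by omega)) hq
    · exact hge
  haveI : Nontrivial (Fin q.out.1.n) := Fin.nontrivial_iff_two_le.mpr h2
  unfold subCoeff
  apply Finset.sum_congr rfl
  intro p _
  split_ifs with hc
  · apply Finset.prod_congr rfl
    intro i _
    apply evalAt_eq
    intro h' hh'
    apply hbelow
    rw [hh']
    -- card of block < nu h
    obtain ⟨j, hj⟩ := exists_ne i
    obtain ⟨v, hv⟩ := hc.1 j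
    have hvmem : v ∉ Finset.univ.filter (fun w => p w = i) := by
      simp only [Finset.mem_filter]
      rintro ⟨-, hvi⟩
      exact hj (hv ▸ hvi ▸ rfl)
    have hss : Finset.univ.filter (fun w => p w = i) ⊂ Finset.univ := by
      rw [Finset.ssubset_univ_iff]
      intro heqS
      rw [heqS] at hvmem
      exact hvmem (Finset.mem_univ v)
    have := Finset.card_lt_card hss
    simpa [nu] using this
  · rfl

lemma support_finite (a : AX X) (H : PreG X) :
    (Function.support (fun q : LClass Unit =>
      ((numLev q.out.1 : ℚ) / (Nat.factorial q.out.1.n : ℚ)) *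
        subCoeff q.out.1.R (fun _ => a) H)).Finite := by
  classical
  set Cond : (q : LClass Unit) → (Fin H.n → Fin q.out.1.n) → Prop :=
    fun q p => Function.Surjective p ∧
      ∀ i j, q.out.1.R i j ↔ i ≠ j ∧ ∃ u v, p u = i ∧ p v = j ∧ H.R u v with hCond
  set ψ : LClass Unit → Fin (H.n + 1) × (Fin H.n → Fin (H.n + 1)) :=
    fun q => if hq : ∃ p, Cond q p then
      (⟨min q.out.1.n H.n, by omega⟩,
        fun v => ⟨min ((Classical.choose hq) v).1 H.n, by omega⟩)
    else (0, fun _ => 0) with hψ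
  have hex : ∀ q : LClass Unit, subCoeff q.out.1.R (fun _ => a) H ≠ 0 → ∃ p, Cond q p := by
    intro q hne
    by_contra hno
    apply hne
    unfold subCoeff
    apply Finset.sum_eq_zero
    intro p _
    rw [if_neg (fun hc => hno ⟨p, hc⟩)]
  refine Set.Finite.of_finite_image (f := ψ) (Set.toFinite _) ?_
  rintro q hqs q' hqs' heq
  have hq : ∃ p, Cond q p := hex q (right_ne_zero_of_mul (Function.mem_support.mp hqs))
  have hq' : ∃ p, Cond q' p := hex q' (right_ne_zero_of_mul (Function.mem_support.mp hqs'))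
  rw [hψ] at heq
  simp only [dif_pos hq, dif_pos hq'] at heq
  set p := Classical.choose hq with hp
  set p' := Classical.choose hq' with hp'
  have hpc := Classical.choose_spec hq
  have hpc' := Classical.choose_spec hq'
  have hle : q.out.1.n ≤ H.n := by
    simpa using Fintype.card_le_of_surjective p hpc.1
  have hle' : q'.out.1.n ≤ H.n := by
    simpa using Fintype.card_le_of_surjective p' hpc'.1
  obtain ⟨heq1, heq2⟩ := Prod.ext_iff.mp heq
  have hnn : q.out.1.n = q'.out.1.n := by
    have := congrArg Fin.val heq1
    simp only at this
    omega
  have hval : ∀ v, ((p v : ℕ)) = ((p' v : ℕ)) := by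
    intro v
    have := congrArg Fin.val (congrFun heq2 v)
    simp only at this
    have hb : (p v : ℕ) < q.out.1.n := (p v).2
    have hb' : (p' v : ℕ) < q'.out.1.n := (p' v).2
    have e1 : (p v : ℕ) = (Classical.choose hq v : ℕ) := rfl
    have e2 : (p' v : ℕ) = (Classical.choose hq' v : ℕ) := rfl
    omega
  -- build the iso
  have hiso : LIso q.out q'.out := by
    have hpp : ∀ v, p' v = finCongr hnn (p v) := fun v => Fin.ext (by simp [← hval v])
    refine ⟨finCongr hnn, fun i j => ?_, fun v => rfl⟩
    rw [hpc.2 i j, hpc'.2 (finCongr hnn i) (finCongr hnn j)]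
    constructor
    · rintro ⟨hne, u, v, hu, hv, huv⟩
      exact ⟨fun hcon => hne ((finCongr hnn).injective hcon), u, v,
        (hpp u).trans (congrArg _ hu), (hpp v).trans (congrArg _ hv), huv⟩
    · rintro ⟨hne, u, v, hu, hv, huv⟩
      exact ⟨fun hcon => hne (congrArg (finCongr hnn) hcon), u, v,
        (finCongr hnn).injective ((hpp u).symm.trans hu),
        (finCongr hnn).injective ((hpp v).symm.trans hv), huv⟩
  calc q = Quot.mk _ q.out := (Quot.out_eq q).symm
    _ = Quot.mk _ q'.out := Quot.sound hiso
    _ = q' := Quot.out_eq q'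


lemma key (h : LClass X) (a a' : AX X) (hb : ∀ h', nu h' < nu h → a h' = a' h') :
    expMap a h - expMap a' h = a h - a' h := by
  unfold expMap
  rw [← finsum_sub_distrib (support_finite a h.out.1) (support_finite a' h.out.1)]
  rw [finsum_eq_single _ oneC
    (fun q hq => by rw [subCoeff_congr a a' h q hq hb]; ring)]
  rw [F_oneC, F_oneC]

noncomputable def invAux (b : AX X) (h : LClass X) : ℚ :=
  b h - expMap (fun h' => if hlt : nu h' < nu h then invAux b h' else 0) h
termination_by nu h
decreasing_by exact hlt

end Aux

/-- For every finite label set `X`, the graph exponential map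
`exp : A_X → 1 + A_X`, `exp(a) := 1 + Σ_g (ℓ_g/|g|!) · g(a,…,a)` with the sum over all
isomorphism classes of directed simple graphs `g`, is a bijection. -/
theorem statement2 (X : Type) [Fintype X] :
    Function.Bijective (expMap (X := X)) := by
  constructor
  · intro a a' hfun
    funext h
    suffices H : ∀ n (h : LClass X), nu h ≤ n → a h = a' h from H (nu h) h le_rfl
    intro n
    induction n with
    | zero =>
      intro h hh
      have := h.out.2.1
      have : 0 < nu h := this
      omega
    | succ n ih =>
      intro h hh
      have hb : ∀ h', nu h' < nu h → a h' = a' h' := fun h' hl => ih h' (by omega)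
      have hk := key h a a' hb
      rw [hfun] at hk
      linarith [hk]
  · intro b
    refine ⟨invAux b, funext fun h => ?_⟩
    set c : AX X := fun h' => if hlt : nu h' < nu h then invAux b h' else 0 with hcdef
    have hb : ∀ h', nu h' < nu h → invAux b h' = c h' := by
      intro h' hl
      simp only [hcdef]
      rw [dif_pos hl]
    have hk := key h (invAux b) c hb
    have hc : c h = 0 := by
      simp only [hcdef]
      rw [dif_neg (lt_irrefl _)]
    have hu : invAux b h = b h - expMap c h := by rw [invAux]
    rw [hc, hu] at hk
    linarith [hk]


end LieGraph
end

section
/- For every real number c with 1 < c < √2 there exists N such that for all n ≥ N, the number of directed simple graphs on n labelled vertices (relations on {1,…,n} that are irreflexive, antisymmetric, acyclic, and weakly connected) is at least c^{n²}. In particular, there exists a constant c > 1 such that this number is at least c^{n²} for all sufficiently large n. -/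
/-- `R` is (the edge relation of) a directed simple graph on `n` labelled vertices:
irreflexive, antisymmetric, acyclic and weakly connected. -/
def IsDSrel (n : ℕ) (R : Fin n → Fin n → Prop) : Prop :=
  (∀ v, ¬ R v v) ∧ (∀ a b, R a b → ¬ R b a) ∧
    (∀ v, ¬ Relation.TransGen R v v) ∧
    ∀ a b : Fin n, Relation.ReflTransGen (fun u v => R u v ∨ R v u) a b

abbrev Dom (n : ℕ) := {p : Fin n × Fin n // 0 < p.1.val ∧ p.1 < p.2}

lemma card_count (n : ℕ) :
    2 ^ (Fintype.card (Dom n)) ≤ Nat.card {R : Fin n → Fin n → Prop // IsDSrel n R} := by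
  have key : Nat.card (Dom n → Bool) ≤ Nat.card {R : Fin n → Fin n → Prop // IsDSrel n R} := by
    apply Nat.card_le_card_of_injective
      (f := fun f : Dom n → Bool =>
        (⟨fun a b => a < b ∧ (a.val = 0 ∨ ∃ h : 0 < a.val ∧ a < b, f ⟨(a, b), h⟩ = true), by
          refine ⟨fun v hv => lt_irrefl v hv.1, fun a b h1 h2 => absurd h2.1 (lt_asymm h1.1),
            fun v hv => ?_, fun a b => ?_⟩
          · have : ∀ x y : Fin n, Relation.TransGen
                (fun a b => a < b ∧ (a.val = 0 ∨ ∃ h : 0 < a.val ∧ a < b, f ⟨(a, b), h⟩ = true)) x y → x < y := by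
              intro x y h
              induction h with
              | single h => exact h.1
              | tail _ h ih => exact ih.trans h.1
            exact lt_irrefl v (this v v hv)
          · set R : Fin n → Fin n → Prop :=
              fun a b => a < b ∧ (a.val = 0 ∨ ∃ h : 0 < a.val ∧ a < b, f ⟨(a, b), h⟩ = true) with hR
            have hz : 0 < n := a.pos
            set z : Fin n := ⟨0, hz⟩ with hzdef
            have step : ∀ x : Fin n, Relation.ReflTransGen (fun u v => R u v ∨ R v u) z x := by
              intro x
              rcases Nat.eq_zero_or_pos x.val with h0 | h0
              · have : x = z := Fin.ext h0
                rw [this]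
              · exact Relation.ReflTransGen.single (Or.inl ⟨h0, Or.inl rfl⟩)
            have hsym : Symmetric (fun u v => R u v ∨ R v u) := fun u v h => h.symm
            exact ((@Relation.ReflTransGen.symmetric _ _ ⟨hsym⟩).symm _ _ (step a)).trans (step b)⟩ :
          {R : Fin n → Fin n → Prop // IsDSrel n R}))
    intro f g hfg
    funext p
    obtain ⟨⟨a, b⟩, h0, hab⟩ := p
    have h := congrFun (congrFun (congrArg Subtype.val hfg) a) b
    simp only at h
    have hf : (f ⟨(a, b), ⟨h0, hab⟩⟩ = true) ↔ (g ⟨(a, b), ⟨h0, hab⟩⟩ = true) := by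
      constructor
      · intro hft
        have : a < b ∧ (a.val = 0 ∨ ∃ h : 0 < a.val ∧ a < b, g ⟨(a, b), h⟩ = true) := by
          rw [← h]; exact ⟨hab, Or.inr ⟨⟨h0, hab⟩, hft⟩⟩
        rcases this.2 with h1 | ⟨_, h2⟩
        · exact absurd h1 h0.ne'
        · exact h2
      · intro hgt
        have : a < b ∧ (a.val = 0 ∨ ∃ h : 0 < a.val ∧ a < b, f ⟨(a, b), h⟩ = true) := by
          rw [h]; exact ⟨hab, Or.inr ⟨⟨h0, hab⟩, hgt⟩⟩
        rcases this.2 with h1 | ⟨_, h2⟩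
        · exact absurd h1 h0.ne'
        · exact h2
    cases hfp : f ⟨(a, b), ⟨h0, hab⟩⟩ <;> cases hgp : g ⟨(a, b), ⟨h0, hab⟩⟩ <;>
      simp_all
  calc 2 ^ (Fintype.card (Dom n)) = Nat.card (Dom n → Bool) := by
        rw [Nat.card_eq_fintype_card, Fintype.card_fun, Fintype.card_bool]
    _ ≤ _ := key

lemma dom_card (n : ℕ) : n ^ 2 ≤ 2 * Fintype.card (Dom n) + 3 * n := by
  have inj : Function.Injective (fun q : Σ b : Fin n, Fin (b.val - 1) =>
      (⟨(⟨q.2.val + 1, by omega⟩, q.1), by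
        constructor
        · exact Nat.succ_pos _
        · have := q.2.isLt; simp only [Fin.lt_def]; omega⟩ : Dom n)) := by
    rintro ⟨b, a⟩ ⟨b', a'⟩ h
    have hb : b = b' := congrArg (fun x => x.val.2) h
    subst hb
    have ha : a.val + 1 = a'.val + 1 := congrArg (fun x => (x.val.1 : Fin n).val) h
    have : a = a' := Fin.ext (by omega)
    rw [this]
  have hcard : Fintype.card (Σ b : Fin n, Fin (b.val - 1)) ≤ Fintype.card (Dom n) :=
    Fintype.card_le_of_injective _ inj
  rw [Fintype.card_sigma] at hcard
  simp only [Fintype.card_fin] at hcard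
  have h1 : ∑ b : Fin n, b.val ≤ (∑ b : Fin n, (b.val - 1)) + n := by
    calc ∑ b : Fin n, b.val ≤ ∑ b : Fin n, ((b.val - 1) + 1) :=
          Finset.sum_le_sum (fun b _ => by omega)
      _ = (∑ b : Fin n, (b.val - 1)) + n := by
          rw [Finset.sum_add_distrib]; simp [Finset.sum_const, Finset.card_univ]
  have h2 : (∑ b : Fin n, b.val) * 2 = n * (n - 1) := by
    rw [Fin.sum_univ_eq_sum_range (fun i => i)]
    exact Finset.sum_range_id_mul_two n
  have h3 : n * (n - 1) + n = n ^ 2 := by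
    cases n with
    | zero => rfl
    | succ m => simp only [Nat.succ_sub_one]; ring
  have h4 : n ^ 2 = (∑ b : Fin n, b.val) * 2 + n := by rw [← h3, h2]
  omega

/-- For every real `c` with `1 < c < √2` there exists `N` such that
for all `n ≥ N` the number of directed simple graphs on `n` labelled vertices is at
least `c^(n²)`.  In particular, there exists a constant `c > 1` such that this number is
at least `c^(n²)` for all sufficiently large `n`. -/
theorem statement10 :
    (∀ c : ℝ, 1 < c → c < Real.sqrt 2 → ∃ N : ℕ, ∀ n ≥ N,
      c ^ (n ^ 2) ≤ (Nat.card {R : Fin n → Fin n → Prop // IsDSrel n R} : ℝ)) ∧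
    (∃ c : ℝ, 1 < c ∧ ∃ N : ℕ, ∀ n ≥ N,
      c ^ (n ^ 2) ≤ (Nat.card {R : Fin n → Fin n → Prop // IsDSrel n R} : ℝ)) := by
  have main : ∀ c : ℝ, 1 < c → c < Real.sqrt 2 → ∃ N : ℕ, ∀ n ≥ N,
      c ^ (n ^ 2) ≤ (Nat.card {R : Fin n → Fin n → Prop // IsDSrel n R} : ℝ) := by
    intro c hc1 hc2
    have hc0 : (0:ℝ) < c := lt_trans one_pos hc1
    have hL : 0 < Real.log c := Real.log_pos hc1
    set L := Real.log c with hLdef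
    have hlog2 : L < Real.log 2 / 2 := by
      have := Real.log_lt_log hc0 hc2
      rwa [Real.log_sqrt (by norm_num)] at this
    set ε := Real.log 2 - 2 * L with hεdef
    have hε : 0 < ε := by simp only [hεdef]; linarith
    refine ⟨⌈6 * L / ε⌉₊ + 5, fun n hn => ?_⟩
    have hn5 : 5 ≤ n := le_trans (Nat.le_add_left 5 _) hn
    have hnr : 6 * L / ε + 5 ≤ (n : ℝ) := by
      have h1 : (⌈6 * L / ε⌉₊ : ℝ) + 5 ≤ (n : ℝ) := by exact_mod_cast hn
      have h2 : 6 * L / ε ≤ (⌈6 * L / ε⌉₊ : ℝ) := Nat.le_ceil _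
      linarith
    have hn' : 6 * L ≤ ((n : ℝ) - 3) * ε := by
      have h3 : 6 * L / ε ≤ (n : ℝ) - 3 := by linarith
      calc 6 * L = (6 * L / ε) * ε := by field_simp
        _ ≤ ((n : ℝ) - 3) * ε := mul_le_mul_of_nonneg_right h3 hε.le
    set k := Fintype.card (Dom n) with hkdef
    have hk : (2:ℕ) ^ k ≤ Nat.card {R : Fin n → Fin n → Prop // IsDSrel n R} := card_count n
    have hd : (n:ℝ) ^ 2 ≤ 2 * (k:ℝ) + 3 * (n:ℝ) := by exact_mod_cast dom_card n
    have step2 : (c : ℝ) ^ (n ^ 2) ≤ (2 : ℝ) ^ k := by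
      rw [← Real.log_le_log_iff (by positivity) (by positivity), Real.log_pow, Real.log_pow]
      have hnn : (0:ℝ) ≤ (n:ℝ) := Nat.cast_nonneg n
      have h1 : 0 ≤ (n:ℝ) * (((n:ℝ) - 3) * ε - 6 * L) :=
        mul_nonneg hnn (by linarith)
      have h2 : 0 ≤ (2 * (k:ℝ) + 3 * (n:ℝ) - (n:ℝ)^2) * L :=
        mul_nonneg (by linarith) hL.le
      have h3 : 0 ≤ (2 * (k:ℝ) + 3 * (n:ℝ) - (n:ℝ)^2) * ε :=
        mul_nonneg (by linarith) hε.le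
      have hgoal : ((n ^ 2 : ℕ) : ℝ) * L ≤ (k : ℝ) * Real.log 2 := by
        push_cast
        nlinarith [h1, h2, h3]
      calc ((n ^ 2 : ℕ) : ℝ) * Real.log c = ((n ^ 2 : ℕ) : ℝ) * L := by rw [hLdef]
        _ ≤ (k : ℝ) * Real.log 2 := hgoal
    calc c ^ (n ^ 2) ≤ (2:ℝ) ^ k := step2
      _ = (((2:ℕ) ^ k : ℕ) : ℝ) := by push_cast; ring
      _ ≤ _ := by exact_mod_cast hk
  refine ⟨main, ⟨1.2, by norm_num, main 1.2 (by norm_num) ?_⟩⟩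
  rw [show (1.2:ℝ) = 1.2 from rfl]
  have : (1.2:ℝ) ^ 2 < 2 := by norm_num
  have h := (Real.lt_sqrt (by norm_num : (0:ℝ) ≤ 1.2)).mpr (by norm_num : (1.2:ℝ)^2 < 2)
  exact h
end
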